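/- Let K : (0,∞)×(0,∞) → ℝ be a continuous symmetric coagulation kernel satisfying the power-law bounds with constants 0 < c₁ ≤ c₂ and exponents γ, λ, assume |γ+2λ| < 1 and γ < 1, and let (f_t)_{t∈[0,T]} be a weak flux solution with initial datum f₀. Then there exists a constant C_T, depending only on T, c₁, c₂, γ, λ and ∫ x f₀(dx), such that for all t ∈ [0,T] and all x₀ > 0: ∫_0^t ∫_{(0,x₀]} x f_s(dx) ds ≤ C_T · x₀^{(1−γ)/2}. In particular, no mass accumulates at zero. -/

import Mathlib

open MeasureTheory Set ENNReal Filter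

/-- The power-law comparison kernel `x^(γ+λ) y^(-λ) + x^(-λ) y^(γ+λ)`. -/
noncomputable def powKernel (γ lam x y : ℝ) : ℝ :=
  x ^ (γ + lam) * y ^ (-lam) + x ^ (-lam) * y ^ (γ + lam)

/-- `K` is a continuous symmetric coagulation kernel satisfying the power-law
bounds with constants `0 < c₁ ≤ c₂` and exponents `γ, lam`. -/
def KernelHyp (K : ℝ → ℝ → ℝ) (c₁ c₂ γ lam : ℝ) : Prop :=
  0 < c₁ ∧ c₁ ≤ c₂ ∧
  ContinuousOn (fun p : ℝ × ℝ => K p.1 p.2) (Ioi 0 ×ˢ Ioi 0) ∧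
  (∀ x y, 0 < x → 0 < y → K x y = K y x) ∧
  (∀ x y, 0 < x → 0 < y →
    c₁ * powKernel γ lam x y ≤ K x y ∧ K x y ≤ c₂ * powKernel γ lam x y)

/-- The region `Ω_z = {(x,y) : 0 < x ≤ z, y > z - x}`. -/
def OmegaSet (z : ℝ) : Set (ℝ × ℝ) :=
  {p : ℝ × ℝ | 0 < p.1 ∧ p.1 ≤ z ∧ z - p.1 < p.2}

/-- The mass flux `J_μ(z) = ∬_{Ω_z} x K(x,y) μ(dx) μ(dy)`. -/
noncomputable def Jflux (K : ℝ → ℝ → ℝ) (μ : Measure ℝ) (z : ℝ) : ℝ≥0∞ :=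
  ∫⁻ p in OmegaSet z, ENNReal.ofReal (p.1 * K p.1 p.2) ∂(μ.prod μ)

/-- A positive Radon measure on `(0,∞)`, seen as a Borel measure on `ℝ`
giving no mass to `(-∞,0]` and finite mass to compact subsets of `(0,∞)`. -/
def IsRadonOnPos (μ : Measure ℝ) : Prop :=
  μ (Iic 0) = 0 ∧ ∀ k : Set ℝ, IsCompact k → k ⊆ Ioi 0 → μ k < ∞

/-- Weak flux solution of the coagulation equation with constant flux from zero
(Definition 2.3 of the paper): (i) uniformly bounded first moments and weak*
continuity in time of the mass measures `x f_t`; (ii) the flux equation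
`∫_{(0,z]} x f_t(dx) - ∫_{(0,z]} x f₀(dx) = -∫_0^t J_{f_s}(z) ds + t` for
almost every `(t,z) ∈ [0,T] × (0,∞)` (stated in added form since all terms are
nonnegative), with the time-integrated flux finite for all `t ∈ [0,T]` and
almost every `z > 0`. -/
def WeakFluxSolution (K : ℝ → ℝ → ℝ) (T : ℝ) (f₀ : Measure ℝ)
    (f : ℝ → Measure ℝ) : Prop :=
  (∀ t ∈ Icc (0:ℝ) T, IsRadonOnPos (f t)) ∧
  (∃ C : ℝ≥0∞, C < ∞ ∧ ∀ t ∈ Icc (0:ℝ) T,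
      (∫⁻ x in Ioi (0:ℝ), ENNReal.ofReal x ∂(f t)) ≤ C) ∧
  (∀ φ : ℝ → ℝ, Continuous φ → HasCompactSupport φ → tsupport φ ⊆ Ioi 0 →
    ContinuousOn (fun t => ∫ x in Ioi (0:ℝ), x * φ x ∂(f t)) (Icc (0:ℝ) T)) ∧
  (∀ t ∈ Icc (0:ℝ) T, ∀ᵐ z ∂(volume.restrict (Ioi (0:ℝ))),
    (∫⁻ s in Icc (0:ℝ) t, Jflux K (f s) z) < ∞) ∧
  (∀ᵐ p ∂((volume.restrict (Icc (0:ℝ) T)).prod (volume.restrict (Ioi (0:ℝ)))),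
    (∫⁻ x in Ioc 0 p.2, ENNReal.ofReal x ∂(f p.1))
        + ∫⁻ s in Icc (0:ℝ) p.1, Jflux K (f s) p.2
      = (∫⁻ x in Ioc 0 p.2, ENNReal.ofReal x ∂f₀) + ENNReal.ofReal p.1)

open Topology

lemma radon_sigmaFinite {μ : Measure ℝ} (h : IsRadonOnPos μ) : SigmaFinite μ := by
  refine ⟨⟨⟨fun n => Iic 0 ∪ Icc (1/(n+1)) (n+1), fun _ => trivial, ?_, ?_⟩⟩⟩
  · intro n
    have hc : μ (Icc (1/(n+1):ℝ) (n+1)) < ∞ := by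
      refine h.2 _ isCompact_Icc fun x hx => lt_of_lt_of_le (by positivity) hx.1
    calc μ (Iic 0 ∪ Icc (1/(n+1):ℝ) (n+1)) ≤ μ (Iic 0) + μ (Icc (1/(n+1):ℝ) (n+1)) :=
          measure_union_le _ _
      _ < ∞ := by rw [h.1]; simpa using hc
  · ext x
    simp only [mem_iUnion, mem_union, mem_Iic, mem_Icc, mem_univ, iff_true]
    rcases le_or_gt x 0 with hx | hx
    · exact ⟨0, Or.inl hx⟩
    · obtain ⟨n, hn⟩ := exists_nat_ge (max x⁻¹ x)
      refine ⟨n, Or.inr ⟨?_, ?_⟩⟩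
      · have h1 : x⁻¹ ≤ (n:ℝ) + 1 := le_trans (le_max_left _ _) (hn.trans (by linarith))
        rw [one_div]
        calc ((n:ℝ)+1)⁻¹ ≤ x⁻¹⁻¹ := by
              exact inv_anti₀ (inv_pos.2 hx) h1
          _ = x := inv_inv x
      · exact le_trans (le_max_right x⁻¹ x) (hn.trans (by linarith))


lemma rpow_lb {z x : ℝ} (hz : 0 < z) (h1 : z/2 < x) (hxz : x ≤ z) (a : ℝ) :
    z ^ a * 2 ^ (-|a|) ≤ x ^ a := by
  have hx : (0:ℝ) < x := lt_trans (by positivity) h1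
  rcases le_or_gt 0 a with ha | ha
  · rw [abs_of_nonneg ha]
    have h : (z/2) ^ a ≤ x ^ a := Real.rpow_le_rpow (by positivity) h1.le ha
    calc z ^ a * 2 ^ (-a) = (z/2) ^ a := by
          rw [Real.div_rpow hz.le (by norm_num), Real.rpow_neg (by norm_num), div_eq_mul_inv]
      _ ≤ x ^ a := h
  · rw [abs_of_neg ha]
    have h2 : (2:ℝ) ^ (-(-a)) ≤ 1 := by
      rw [neg_neg]
      exact Real.rpow_le_one_of_one_le_of_nonpos (by norm_num) ha.le
    have h3 : z ^ a ≤ x ^ a := Real.rpow_le_rpow_of_nonpos hx hxz ha.le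
    calc z ^ a * 2 ^ (-(-a)) ≤ z ^ a * 1 :=
          mul_le_mul_of_nonneg_left h2 (Real.rpow_nonneg hz.le a)
      _ = z ^ a := mul_one _
      _ ≤ x ^ a := h3

lemma jflux_lower {K : ℝ → ℝ → ℝ} {c₁ c₂ γ lam : ℝ} (hK : KernelHyp K c₁ c₂ γ lam)
    (μ : Measure ℝ) [SFinite μ] {z : ℝ} (hz : 0 < z) :
    ENNReal.ofReal (c₁ * ((2:ℝ)^(-(1:ℝ)) * 2^(-|γ+lam|) * 2^(-|lam|)) * z ^ (γ-1)) *
      (∫⁻ x in Ioc (z/2) z, ENNReal.ofReal x ∂μ) ^ (2:ℝ) ≤ Jflux K μ z := by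
  have hc₁ : 0 < c₁ := hK.1
  set κ : ℝ := (2:ℝ)^(-(1:ℝ)) * 2^(-|γ+lam|) * 2^(-|lam|) with hκ
  have hκ0 : 0 < κ := by positivity
  set S : Set ℝ := Ioc (z/2) z with hS
  set m : ℝ≥0∞ := ∫⁻ x in S, ENNReal.ofReal x ∂μ with hm'
  -- (a)
  have hm : m ≤ ENNReal.ofReal z * μ S := by
    calc m ≤ ∫⁻ _ in S, ENNReal.ofReal z ∂μ :=
          lintegral_mono_ae ((ae_restrict_mem measurableSet_Ioc).mono fun x hx =>
            ENNReal.ofReal_le_ofReal hx.2)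
      _ = ENNReal.ofReal z * μ S := setLIntegral_const _ _
  -- (b) pointwise lower bound on S ×ˢ S
  have hpt : ∀ p ∈ S ×ˢ S, ENNReal.ofReal (c₁ * κ * z ^ (γ+1))
      ≤ ENNReal.ofReal (p.1 * K p.1 p.2) := by
    rintro ⟨x, y⟩ ⟨hx, hy⟩
    refine ENNReal.ofReal_le_ofReal ?_
    have hx0 : (0:ℝ) < x := lt_trans (by positivity) hx.1
    have hy0 : (0:ℝ) < y := lt_trans (by positivity) hy.1
    have h1 : z ^ (γ+lam) * 2 ^ (-|γ+lam|) ≤ x ^ (γ+lam) := rpow_lb hz hx.1 hx.2 _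
    have h2 : z ^ (-lam) * 2 ^ (-|lam|) ≤ y ^ (-lam) := by
      have := rpow_lb hz hy.1 hy.2 (-lam)
      rwa [abs_neg] at this
    have hKlow : c₁ * (x ^ (γ+lam) * y ^ (-lam)) ≤ K x y := by
      refine le_trans ?_ (hK.2.2.2.2 x y hx0 hy0).1
      have hB : 0 ≤ x ^ (-lam) * y ^ (γ+lam) := by positivity
      unfold powKernel
      nlinarith [hc₁.le]
    have hz1 : z ^ (γ+1) = z ^ (γ+lam) * z ^ (-lam) * z := by
      have : z ^ (γ+1) = z ^ ((γ + lam) + (-lam) + 1) := by ring_nf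
      rw [this, Real.rpow_add hz, Real.rpow_add hz, Real.rpow_one]
    have hhalf : z * (2:ℝ)^(-(1:ℝ)) = z/2 := by
      rw [Real.rpow_neg_one]; ring
    calc c₁ * κ * z ^ (γ+1)
        = (z * (2:ℝ)^(-(1:ℝ))) * (c₁ * ((z ^ (γ+lam) * 2 ^ (-|γ+lam|)) *
            (z ^ (-lam) * 2 ^ (-|lam|)))) := by rw [hz1, hκ]; ring
      _ ≤ x * (c₁ * (x ^ (γ+lam) * y ^ (-lam))) := by
          rw [hhalf]
          refine mul_le_mul hx.1.le ?_ (by positivity) hx0.le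
          exact mul_le_mul_of_nonneg_left
            (mul_le_mul h1 h2 (by positivity) (by positivity)) hc₁.le
      _ ≤ x * K x y := mul_le_mul_of_nonneg_left hKlow hx0.le
  -- (c)
  have hsub : S ×ˢ S ⊆ OmegaSet z := by
    rintro ⟨x, y⟩ ⟨hx, hy⟩
    exact ⟨lt_trans (by positivity) hx.1, hx.2, lt_of_le_of_lt (by linarith [hx.1]) hy.1⟩
  -- (d)
  have hprod : (μ.prod μ) (S ×ˢ S) = μ S * μ S := Measure.prod_prod S S
  have hmS2 : (μ S) ^ (2:ℝ) = μ S * μ S := by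
    rw [show (2:ℝ) = ((2:ℕ):ℝ) by norm_num, ENNReal.rpow_natCast, sq]
  calc ENNReal.ofReal (c₁ * κ * z ^ (γ-1)) * m ^ (2:ℝ)
      ≤ ENNReal.ofReal (c₁ * κ * z ^ (γ-1)) * (ENNReal.ofReal z * μ S) ^ (2:ℝ) := by
        exact mul_le_mul_right (ENNReal.rpow_le_rpow hm (by norm_num)) _
    _ = ENNReal.ofReal (c₁ * κ * z ^ (γ+1)) * (μ S) ^ (2:ℝ) := by
        have hre : c₁ * κ * z ^ (γ-1) * z ^ (2:ℝ) = c₁ * κ * z ^ (γ+1) := by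
          rw [mul_assoc, ← Real.rpow_add hz, show γ-1+2 = γ+1 by ring]
        rw [ENNReal.mul_rpow_of_nonneg _ _ (by norm_num : (0:ℝ) ≤ 2), ← mul_assoc,
          ENNReal.ofReal_rpow_of_pos hz, ← ENNReal.ofReal_mul (by positivity), hre]
    _ = ∫⁻ _ in S ×ˢ S, ENNReal.ofReal (c₁ * κ * z ^ (γ+1)) ∂(μ.prod μ) := by
        rw [setLIntegral_const, hprod, hmS2]
    _ ≤ ∫⁻ p in S ×ˢ S, ENNReal.ofReal (p.1 * K p.1 p.2) ∂(μ.prod μ) :=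
        lintegral_mono_ae ((ae_restrict_mem (measurableSet_Ioc.prod measurableSet_Ioc)).mono
          fun p hp => hpt p hp)
    _ ≤ Jflux K μ z := lintegral_mono_set hsub

lemma mass_aemeasurable (T : ℝ) (f : ℝ → Measure ℝ)
    (hrad : ∀ t ∈ Icc (0:ℝ) T, IsRadonOnPos (f t))
    (hw : ∀ φ : ℝ → ℝ, Continuous φ → HasCompactSupport φ → tsupport φ ⊆ Ioi 0 →
      ContinuousOn (fun t => ∫ x in Ioi (0:ℝ), x * φ x ∂(f t)) (Icc (0:ℝ) T))
    {a b : ℝ} (ha : 0 < a) (hab : a < b) :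
    AEMeasurable (fun s => ∫⁻ x in Ioc a b, ENNReal.ofReal x ∂(f s))
      (volume.restrict (Icc (0:ℝ) T)) := by
  set φ : ℕ → ℝ → ℝ := fun n x =>
    max 0 (min 1 (min ((x - a) * (n+1)) ((b + 1/(n+1) - x) * (n+1)))) with hφ
  have hφcont : ∀ n, Continuous (φ n) := by
    intro n
    apply continuous_const.max
    apply continuous_const.min
    exact (((continuous_id.sub continuous_const).mul continuous_const).min
      ((continuous_const.sub continuous_id).mul continuous_const))
  have hφ_nonneg : ∀ n x, 0 ≤ φ n x := fun n x => le_max_left _ _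
  have hφ_le_one : ∀ n x, φ n x ≤ 1 := fun n x => max_le zero_le_one (min_le_left _ _)
  have hφ0 : ∀ (n : ℕ) (x : ℝ), x ≤ a → φ n x = 0 := by
    intro n x hx
    have : min 1 (min ((x - a) * (n+1)) ((b + 1/(n+1) - x) * (n+1))) ≤ 0 := by
      refine le_trans (min_le_right _ _) (le_trans (min_le_left _ _) ?_)
      have : x - a ≤ 0 := by linarith
      have hn : (0:ℝ) ≤ n + 1 := by positivity
      exact mul_nonpos_of_nonpos_of_nonneg this hn
    exact max_eq_left this
  have hφ0' : ∀ (n : ℕ) (x : ℝ), b + 1/(n+1) ≤ x → φ n x = 0 := by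
    intro n x hx
    have : min 1 (min ((x - a) * (n+1)) ((b + 1/(n+1) - x) * (n+1))) ≤ 0 := by
      refine le_trans (min_le_right _ _) (le_trans (min_le_right _ _) ?_)
      have h1 : b + 1/(n+1) - x ≤ 0 := by linarith
      have hn : (0:ℝ) ≤ n + 1 := by positivity
      exact mul_nonpos_of_nonpos_of_nonneg h1 hn
    exact max_eq_left this
  have hsupp : ∀ n, ∀ x ∉ Icc a (b+1), φ n x = 0 := by
    intro n x hx
    rcases not_and_or.1 hx with h | h
    · exact hφ0 n x (le_of_not_ge h)
    · push_neg at h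
      refine hφ0' n x ?_
      have h1 : 1/((n:ℝ)+1) ≤ 1 := by
        rw [div_le_one (by positivity)]; linarith [Nat.cast_nonneg (α := ℝ) n]
      linarith
  have hφc : ∀ n, HasCompactSupport (φ n) :=
    fun n => HasCompactSupport.intro isCompact_Icc (hsupp n)
  have hφts : ∀ n, tsupport (φ n) ⊆ Ioi 0 := by
    intro n
    have h1 : tsupport (φ n) ⊆ Icc a (b+1) :=
      closure_minimal (Function.support_subset_iff'.2 (hsupp n)) isClosed_Icc
    exact h1.trans fun x hx => lt_of_lt_of_le ha hx.1
  -- bounded integrand facts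
  have hpt_nonneg : ∀ n x, 0 ≤ x * φ n x := by
    intro n x
    rcases le_or_gt x a with h | h
    · rw [hφ0 n x h, mul_zero]
    · exact mul_nonneg (le_of_lt (lt_trans ha h)) (hφ_nonneg n x)
  have hpt_bound : ∀ n x, ENNReal.ofReal (x * φ n x)
      ≤ (Icc a (b+1)).indicator (fun _ => ENNReal.ofReal (b+1)) x := by
    intro n x
    by_cases hx : x ∈ Icc a (b+1)
    · rw [indicator_of_mem hx]
      refine ENNReal.ofReal_le_ofReal ?_
      calc x * φ n x ≤ x * 1 := mul_le_mul_of_nonneg_left (hφ_le_one n x)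
            (le_trans (le_of_lt ha) hx.1)
        _ = x := mul_one x
        _ ≤ b + 1 := hx.2
    · rw [indicator_of_notMem hx, hsupp n x hx, mul_zero]
      simp
  set gn : ℕ → ℝ → ℝ≥0∞ :=
    fun n s => ENNReal.ofReal (∫ x in Ioi (0:ℝ), x * φ n x ∂(f s)) with hgn
  have hgn_meas : ∀ n, AEMeasurable (gn n) (volume.restrict (Icc (0:ℝ) T)) := by
    intro n
    exact (continuous_ofReal.comp_continuousOn
      (hw (φ n) (hφcont n) (hφc n) (hφts n))).aemeasurable measurableSet_Icc
  have htend : ∀ s ∈ Icc (0:ℝ) T, Tendsto (fun n => gn n s) atTop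
      (𝓝 (∫⁻ x in Ioc a b, ENNReal.ofReal x ∂(f s))) := by
    intro s hs
    set ν : Measure ℝ := (f s).restrict (Ioi 0) with hν
    have hνIcc : ν (Icc a (b+1)) < ∞ := by
      rw [hν, Measure.restrict_apply measurableSet_Icc]
      refine lt_of_le_of_lt (measure_mono inter_subset_left) ?_
      exact (hrad s hs).2 _ isCompact_Icc (fun x hx => lt_of_lt_of_le ha hx.1)
    have hbfin : (∫⁻ x, (Icc a (b+1)).indicator (fun _ => ENNReal.ofReal (b+1)) x ∂ν) ≠ ∞ := by
      rw [lintegral_indicator measurableSet_Icc, setLIntegral_const]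
      exact (ENNReal.mul_lt_top ofReal_lt_top hνIcc).ne
    -- step 1 : gn n s as a lintegral
    have hstep1 : ∀ n, gn n s = ∫⁻ x, ENNReal.ofReal (x * φ n x) ∂ν := by
      intro n
      have hint : Integrable (fun x => x * φ n x) ν := by
        constructor
        · exact (continuous_id.mul (hφcont n)).aestronglyMeasurable
        · rw [hasFiniteIntegral_iff_norm]
          calc (∫⁻ x, ENNReal.ofReal ‖x * φ n x‖ ∂ν)
              ≤ ∫⁻ x, (Icc a (b+1)).indicator (fun _ => ENNReal.ofReal (b+1)) x ∂ν := by
                refine lintegral_mono fun x => ?_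
                rw [Real.norm_eq_abs, abs_of_nonneg (hpt_nonneg n x)]
                exact hpt_bound n x
            _ < ∞ := lt_of_le_of_ne le_top hbfin
      exact ofReal_integral_eq_lintegral_ofReal hint
        (Eventually.of_forall (hpt_nonneg n))
    -- step 2 : dominated convergence
    have hlim : ∀ x, Tendsto (fun n => ENNReal.ofReal (x * φ n x)) atTop
        (𝓝 ((Ioc a b).indicator (fun x => ENNReal.ofReal x) x)) := by
      intro x
      rcases le_or_gt x a with hx | hx
      · have : ∀ n, ENNReal.ofReal (x * φ n x) = 0 := by
          intro n; rw [hφ0 n x hx, mul_zero, ENNReal.ofReal_zero]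
        rw [indicator_of_notMem (fun hm => absurd hm.1 (not_lt.2 hx))]
        simpa [this] using tendsto_const_nhds
      rcases le_or_gt x b with hxb | hxb
      · -- a < x ≤ b : eventually φ n x = 1
        rw [Set.indicator_of_mem (mem_Ioc.mpr ⟨hx, hxb⟩) (fun x => ENNReal.ofReal x)]
        have hev : ∀ᶠ n in atTop, ENNReal.ofReal (x * φ n x) = ENNReal.ofReal x := by
          obtain ⟨N, hN⟩ := exists_nat_ge (1/(x - a))
          refine eventually_atTop.2 ⟨N, fun n hn => ?_⟩
          have hA : (1:ℝ) ≤ (x - a) * (n+1) := by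
            have hxa : (0:ℝ) < x - a := by linarith
            have h1 : 1/(x-a) ≤ (n:ℝ) + 1 := by
              refine le_trans hN ?_
              have := (Nat.cast_le (α := ℝ)).2 hn
              linarith
            calc (1:ℝ) = (1/(x-a)) * (x-a) := by field_simp
              _ ≤ ((n:ℝ)+1) * (x-a) := by
                  exact mul_le_mul_of_nonneg_right h1 hxa.le
              _ = (x-a) * (n+1) := by ring
          have hB : (1:ℝ) ≤ (b + 1/(n+1) - x) * (n+1) := by
            have hn1 : (0:ℝ) < (n:ℝ)+1 := by positivity
            have : (b + 1/(n+1) - x) * (n+1) = (b - x)*(n+1) + 1 := by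
              field_simp; ring
            rw [this]
            nlinarith
          have : φ n x = 1 := by
            rw [hφ]
            simp only
            rw [min_eq_left (le_min hA hB) |>.symm]
            rw [min_eq_left (le_min hA hB)] at *
            rw [min_eq_left, max_eq_right zero_le_one]
            exact le_min hA hB
          rw [this, mul_one]
        exact Tendsto.congr' (hev.mono fun n h => h.symm) tendsto_const_nhds
      · -- b < x : eventually φ n x = 0
        rw [indicator_of_notMem (fun hm => absurd hm.2 (not_le.2 hxb))]
        have hev : ∀ᶠ n in atTop, ENNReal.ofReal (x * φ n x) = 0 := by
          obtain ⟨N, hN⟩ := exists_nat_ge (1/(x - b))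
          refine eventually_atTop.2 ⟨N, fun n hn => ?_⟩
          have hxb0 : (0:ℝ) < x - b := by linarith
          have h1 : 1/((n:ℝ)+1) ≤ x - b := by
            rw [div_le_iff₀ (by positivity)]
            calc (1:ℝ) = (1/(x-b)) * (x-b) := by field_simp
              _ ≤ ((n:ℝ)+1) * (x-b) := mul_le_mul_of_nonneg_right
                  (le_trans hN (by push_cast; linarith [(Nat.cast_le (α := ℝ)).2 hn])) hxb0.le
              _ = (x-b) * ((n:ℝ)+1) := by ring
          rw [hφ0' n x (by linarith), mul_zero, ENNReal.ofReal_zero]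
        exact Tendsto.congr' (hev.mono fun n h => h.symm) tendsto_const_nhds
    have hdct := tendsto_lintegral_of_dominated_convergence
      (μ := ν) (F := fun n x => ENNReal.ofReal (x * φ n x))
      ((Icc a (b+1)).indicator (fun _ => ENNReal.ofReal (b+1)))
      (fun n => (continuous_ofReal.comp (continuous_id.mul (hφcont n))).measurable)
      (fun n => Eventually.of_forall (hpt_bound n)) hbfin
      (Eventually.of_forall hlim)
    have hrw : (∫⁻ x, (Ioc a b).indicator (fun x => ENNReal.ofReal x) x ∂ν)
        = ∫⁻ x in Ioc a b, ENNReal.ofReal x ∂(f s) := by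
      rw [lintegral_indicator measurableSet_Ioc, hν,
        Measure.restrict_restrict measurableSet_Ioc]
      congr 1
      rw [inter_eq_left.2 (show Ioc a b ⊆ Ioi 0 from fun x hx => lt_trans ha hx.1)]
    rw [hrw] at hdct
    exact Tendsto.congr (fun n => (hstep1 n).symm) hdct
  exact aemeasurable_of_tendsto_metrizable_ae atTop hgn_meas
    (by filter_upwards [ae_restrict_mem measurableSet_Icc] with s hs using htend s hs)

lemma time_mass_bound {K : ℝ → ℝ → ℝ} {c₁ c₂ γ lam : ℝ} (hK : KernelHyp K c₁ c₂ γ lam)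
    {T τ : ℝ} (hτ : τ ∈ Icc (0:ℝ) T)
    {f : ℝ → Measure ℝ} (hrad : ∀ t ∈ Icc (0:ℝ) T, IsRadonOnPos (f t))
    {z : ℝ} (hz : 0 < z)
    (hmeasm : AEMeasurable (fun s => ∫⁻ x in Ioc (z/2) z, ENNReal.ofReal x ∂(f s))
      (volume.restrict (Icc (0:ℝ) τ)))
    {A : ℝ≥0∞}
    (hgood : (∫⁻ u in Icc (0:ℝ) τ, Jflux K (f u) z) ≤ A) :
    (∫⁻ s in Icc (0:ℝ) τ, ∫⁻ x in Ioc (z/2) z, ENNReal.ofReal x ∂(f s))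
      ≤ ((ENNReal.ofReal (c₁ * ((2:ℝ)^(-(1:ℝ)) * 2^(-|γ+lam|) * 2^(-|lam|))))⁻¹ * A
          * ENNReal.ofReal T) ^ ((1:ℝ)/2) * ENNReal.ofReal (z ^ ((1-γ)/2)) := by
  have hc₁ : 0 < c₁ := hK.1
  set κ : ℝ := (2:ℝ)^(-(1:ℝ)) * 2^(-|γ+lam|) * 2^(-|lam|) with hκdef
  have hκ0 : 0 < κ := by positivity
  set m : ℝ → ℝ≥0∞ := fun s => ∫⁻ x in Ioc (z/2) z, ENNReal.ofReal x ∂(f s) with hm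
  set e : ℝ≥0∞ := ENNReal.ofReal (c₁ * κ * z ^ (γ-1)) with he
  have he0 : e ≠ 0 := (ENNReal.ofReal_pos.2 (by positivity)).ne'
  have heT : e ≠ ∞ := ofReal_ne_top
  set μτ : Measure ℝ := volume.restrict (Icc (0:ℝ) τ) with hμτ
  -- pointwise bound m s ^ 2 ≤ e⁻¹ * J
  have hpt : ∀ s ∈ Icc (0:ℝ) τ, m s ^ (2:ℝ) ≤ e⁻¹ * Jflux K (f s) z := by
    intro s hs
    have hsT : s ∈ Icc (0:ℝ) T := ⟨hs.1, le_trans hs.2 hτ.2⟩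
    haveI := radon_sigmaFinite (hrad s hsT)
    have hJ := jflux_lower hK (f s) hz
    calc m s ^ (2:ℝ) = e⁻¹ * e * m s ^ (2:ℝ) := by
          rw [ENNReal.inv_mul_cancel he0 heT, one_mul]
      _ = e⁻¹ * (e * m s ^ (2:ℝ)) := by rw [mul_assoc]
      _ ≤ e⁻¹ * Jflux K (f s) z := mul_le_mul_right hJ _
  -- Hölder
  have hconj : Real.HolderConjugate 2 2 := Real.HolderConjugate.two_two
  have hH := ENNReal.lintegral_mul_le_Lp_mul_Lq μτ hconj hmeasm
    (aemeasurable_const (b := (1:ℝ≥0∞)))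
  simp only [Pi.mul_apply, mul_one, ENNReal.one_rpow] at hH
  have h1 : (∫⁻ _, (1:ℝ≥0∞) ∂μτ) = ENNReal.ofReal τ := by
    rw [lintegral_one, hμτ, Measure.restrict_apply_univ, Real.volume_Icc, sub_zero]
  have h2 : (∫⁻ s, m s ^ (2:ℝ) ∂μτ) ≤ e⁻¹ * A := by
    calc (∫⁻ s, m s ^ (2:ℝ) ∂μτ) ≤ ∫⁻ s, e⁻¹ * Jflux K (f s) z ∂μτ := by
          refine lintegral_mono_ae ?_
          filter_upwards [ae_restrict_mem measurableSet_Icc] with s hs using hpt s hs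
      _ = e⁻¹ * ∫⁻ s in Icc (0:ℝ) τ, Jflux K (f s) z :=
          lintegral_const_mul' _ _ (ENNReal.inv_ne_top.2 he0)
      _ ≤ e⁻¹ * A := mul_le_mul_right hgood _
  have h3 : (∫⁻ s, m s ∂μτ) ≤ (e⁻¹ * A) ^ ((1:ℝ)/2) * (ENNReal.ofReal T) ^ ((1:ℝ)/2) := by
    refine le_trans hH ?_
    rw [h1]
    exact mul_le_mul (ENNReal.rpow_le_rpow h2 (by norm_num))
      (ENNReal.rpow_le_rpow (ENNReal.ofReal_le_ofReal hτ.2) (by norm_num))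
      zero_le zero_le
  -- rewrite the right-hand side
  have hsplit : e⁻¹ = (ENNReal.ofReal (c₁ * κ))⁻¹ * ENNReal.ofReal (z ^ (1-γ)) := by
    have h4 : e = ENNReal.ofReal (c₁ * κ) * ENNReal.ofReal (z ^ (γ-1)) := by
      rw [he, ← ENNReal.ofReal_mul (by positivity)]
    rw [h4, ENNReal.mul_inv (Or.inl (ENNReal.ofReal_pos.2 (by positivity)).ne')
      (Or.inl ofReal_ne_top)]
    congr 1
    rw [← ENNReal.ofReal_inv_of_pos (by positivity), ← Real.rpow_neg hz.le, neg_sub]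
  calc (∫⁻ s, m s ∂μτ) ≤ (e⁻¹ * A) ^ ((1:ℝ)/2) * (ENNReal.ofReal T) ^ ((1:ℝ)/2) := h3
    _ = (e⁻¹ * A * ENNReal.ofReal T) ^ ((1:ℝ)/2) :=
        (ENNReal.mul_rpow_of_nonneg _ _ (by norm_num : (0:ℝ) ≤ 1/2)).symm
    _ = ((ENNReal.ofReal (c₁ * κ))⁻¹ * A * ENNReal.ofReal T
          * ENNReal.ofReal (z ^ (1-γ))) ^ ((1:ℝ)/2) := by
        rw [hsplit]; ring_nf
    _ = ((ENNReal.ofReal (c₁ * κ))⁻¹ * A * ENNReal.ofReal T) ^ ((1:ℝ)/2)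
          * ENNReal.ofReal (z ^ ((1-γ)/2)) := by
        rw [ENNReal.mul_rpow_of_nonneg _ _ (by norm_num : (0:ℝ) ≤ 1/2)]
        congr 1
        rw [ENNReal.ofReal_rpow_of_pos (by positivity), ← Real.rpow_mul hz.le,
          show (1-γ)*((1:ℝ)/2) = (1-γ)/2 by ring]

/-- Proposition 5.3 of the paper: for a weak flux solution
there is a constant `C_T`, depending only on `T`, the kernel constants and
exponents, and the first moment of `f₀`, such that for all `t ∈ [0,T]` and
`x₀ > 0`, `∫_0^t ∫_{(0,x₀]} x f_s(dx) ds ≤ C_T · x₀^{(1-γ)/2}`; in particular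
no mass accumulates at zero. -/
theorem weak_flux_solution_no_mass_at_zero
    (K : ℝ → ℝ → ℝ) (c₁ c₂ γ lam : ℝ)
    (hK : KernelHyp K c₁ c₂ γ lam)
    (hexp1 : |γ + 2 * lam| < 1) (hexp2 : γ < 1)
    (f₀ : Measure ℝ) (hf₀ : IsRadonOnPos f₀)
    (hf₀m : (∫⁻ x in Ioi (0:ℝ), ENNReal.ofReal x ∂f₀) < ∞)
    (T : ℝ) (hT : 0 < T)
    (f : ℝ → Measure ℝ) (hf : WeakFluxSolution K T f₀ f) :
    ∃ C_T : ℝ, ∀ t ∈ Icc (0:ℝ) T, ∀ x₀ > (0:ℝ),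
      (∫⁻ s in Icc (0:ℝ) t, ∫⁻ x in Ioc (0:ℝ) x₀, ENNReal.ofReal x ∂(f s))
        ≤ ENNReal.ofReal (C_T * x₀ ^ ((1 - γ) / 2)) := by
  obtain ⟨hrad, ⟨Cm, hCmfin, hCm⟩, hw, hJfin, heq⟩ := hf
  have hc₁ : 0 < c₁ := hK.1
  set κ : ℝ := (2:ℝ)^(-(1:ℝ)) * 2^(-|γ+lam|) * 2^(-|lam|) with hκdef
  have hκ0 : 0 < κ := by positivity
  set p : ℝ := (1-γ)/2 with hpdef
  have hp0 : 0 < p := by rw [hpdef]; linarith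
  set M₀ : ℝ≥0∞ := ∫⁻ x in Ioi (0:ℝ), ENNReal.ofReal x ∂f₀ with hM₀
  set A : ℝ≥0∞ := M₀ + ENNReal.ofReal T with hA
  have hAfin : A ≠ ∞ := by
    rw [hA]
    exact ENNReal.add_ne_top.2 ⟨hf₀m.ne, ofReal_ne_top⟩
  -- good times: for a.e. s, the time-integrated flux at a.e. z is bounded by A
  have hae : ∀ᵐ s ∂(volume.restrict (Icc (0:ℝ) T)), ∀ᵐ z ∂(volume.restrict (Ioi (0:ℝ))),
      (∫⁻ u in Icc (0:ℝ) s, Jflux K (f u) z) ≤ A := by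
    have hmem : ∀ᵐ q ∂((volume.restrict (Icc (0:ℝ) T)).prod (volume.restrict (Ioi (0:ℝ)))),
        q ∈ (Icc (0:ℝ) T) ×ˢ (Ioi (0:ℝ)) := by
      rw [Measure.prod_restrict]
      exact ae_restrict_mem (measurableSet_Icc.prod measurableSet_Ioi)
    have h1 : ∀ᵐ q ∂((volume.restrict (Icc (0:ℝ) T)).prod (volume.restrict (Ioi (0:ℝ)))),
        (∫⁻ u in Icc (0:ℝ) q.1, Jflux K (f u) q.2) ≤ A := by
      filter_upwards [heq, hmem] with q hq hqm
      calc (∫⁻ u in Icc (0:ℝ) q.1, Jflux K (f u) q.2)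
          ≤ (∫⁻ x in Ioc 0 q.2, ENNReal.ofReal x ∂(f q.1))
              + ∫⁻ u in Icc (0:ℝ) q.1, Jflux K (f u) q.2 := le_add_self
        _ = (∫⁻ x in Ioc 0 q.2, ENNReal.ofReal x ∂f₀) + ENNReal.ofReal q.1 := hq
        _ ≤ A := by
            rw [hA]
            exact add_le_add (lintegral_mono_set (fun x hx => hx.1))
              (ENNReal.ofReal_le_ofReal hqm.1.2)
    exact Measure.ae_ae_of_ae_prod h1
  -- measurability of partial-mass functions
  have hmeas : ∀ a b : ℝ, 0 < a → a < b →
      AEMeasurable (fun s => ∫⁻ x in Ioc a b, ENNReal.ofReal x ∂(f s))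
        (volume.restrict (Icc (0:ℝ) T)) :=
    fun a b ha hab => mass_aemeasurable T f hrad hw ha hab
  -- constants
  set G : ℝ≥0∞ := (ENNReal.ofReal (c₁ * κ))⁻¹ * A * ENNReal.ofReal T with hG
  have hGfin : G ≠ ∞ := by
    rw [hG]
    exact ENNReal.mul_ne_top (ENNReal.mul_ne_top
      (ENNReal.inv_ne_top.2 (ENNReal.ofReal_pos.2 (by positivity)).ne') hAfin) ofReal_ne_top
  set r : ℝ≥0∞ := ENNReal.ofReal ((3/4:ℝ) ^ p) with hr
  have hrlt : r < 1 := by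
    rw [hr]
    exact ENNReal.ofReal_lt_one.2 (Real.rpow_lt_one (by norm_num) (by norm_num) hp0)
  set H : ℝ≥0∞ := G ^ ((1:ℝ)/2) * ENNReal.ofReal ((3/2:ℝ) ^ p) * (1 - r)⁻¹ with hH
  have hHfin : H ≠ ∞ := by
    rw [hH]
    refine ENNReal.mul_ne_top (ENNReal.mul_ne_top ?_ ofReal_ne_top) ?_
    · exact ENNReal.rpow_ne_top_of_nonneg (by norm_num) hGfin
    · exact ENNReal.inv_ne_top.2 (tsub_pos_of_lt hrlt).ne'
  -- key lemma: at a good time τ, the τ-integrated mass below x₀ is ≤ H * x₀ ^ p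
  have key : ∀ τ ∈ Icc (0:ℝ) T,
      (∀ᵐ z ∂(volume.restrict (Ioi (0:ℝ))), (∫⁻ u in Icc (0:ℝ) τ, Jflux K (f u) z) ≤ A) →
      ∀ x₀ > (0:ℝ), (∫⁻ s in Icc (0:ℝ) τ, ∫⁻ x in Ioc (0:ℝ) x₀, ENNReal.ofReal x ∂(f s))
        ≤ H * ENNReal.ofReal (x₀ ^ p) := by
    intro τ hτ hgood x₀ hx₀
    set ρ : ℝ := 3/4 with hρdef
    have hρ0 : (0:ℝ) < ρ := by norm_num
    have hρ1 : ρ < 1 := by norm_num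
    have hrestrict : (volume.restrict (Icc (0:ℝ) T)).restrict (Icc (0:ℝ) τ)
        = volume.restrict (Icc (0:ℝ) τ) := by
      rw [Measure.restrict_restrict measurableSet_Icc,
        inter_eq_left.2 (Icc_subset_Icc_right hτ.2)]
    -- choose a good z in each band
    have hzk : ∀ k : ℕ, ∃ z : ℝ, ρ^k * x₀ ≤ z ∧ z ≤ 3/2 * (ρ^k * x₀) ∧
        (∫⁻ u in Icc (0:ℝ) τ, Jflux K (f u) z) ≤ A := by
      intro k
      by_contra hcon
      push_neg at hcon
      have hlo : (0:ℝ) < ρ^k * x₀ := by positivity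
      rw [ae_iff] at hgood
      have hsub : Ioc (ρ^k * x₀) (3/2 * (ρ^k * x₀)) ⊆
          {z : ℝ | ¬ (∫⁻ u in Icc (0:ℝ) τ, Jflux K (f u) z) ≤ A} :=
        fun z hz h => absurd h (not_le.2 (hcon z hz.1.le hz.2))
      have h0 := measure_mono_null hsub hgood
      rw [Measure.restrict_apply measurableSet_Ioc,
        inter_eq_left.2 (show Ioc (ρ^k * x₀) (3/2 * (ρ^k * x₀)) ⊆ Ioi 0 from
          fun z hz => lt_trans hlo hz.1), Real.volume_Ioc] at h0
      exact absurd h0 (ENNReal.ofReal_pos.2 (by linarith)).ne'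
    choose zk hzk1 hzk2 hzkA using hzk
    have hzkpos : ∀ k, 0 < zk k := fun k => lt_of_lt_of_le (by positivity) (hzk1 k)
    -- band inclusion
    have hband : ∀ k, Ioc (ρ^(k+1) * x₀) (ρ^k * x₀) ⊆ Ioc (zk k / 2) (zk k) := by
      intro k x hx
      constructor
      · have h1 : ρ^(k+1) * x₀ = 3/4 * (ρ^k * x₀) := by rw [pow_succ]; ring
        have h2 : zk k / 2 ≤ ρ^(k+1) * x₀ := by
          rw [h1]; linarith [hzk2 k]
        exact lt_of_le_of_lt h2 hx.1
      · exact le_trans hx.2 (hzk1 k)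
    -- per-band bound
    have hband_bound : ∀ k : ℕ,
        (∫⁻ s in Icc (0:ℝ) τ, ∫⁻ x in Ioc (ρ^(k+1) * x₀) (ρ^k * x₀), ENNReal.ofReal x ∂(f s))
          ≤ (G ^ ((1:ℝ)/2) * ENNReal.ofReal ((3/2:ℝ) ^ p) * ENNReal.ofReal (x₀ ^ p)) * r^k := by
      intro k
      have hmeasmk : AEMeasurable
          (fun s => ∫⁻ x in Ioc (zk k / 2) (zk k), ENNReal.ofReal x ∂(f s))
          (volume.restrict (Icc (0:ℝ) τ)) := by
        have h := (hmeas (zk k / 2) (zk k) (half_pos (hzkpos k)) (by linarith [hzkpos k])).restrict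
          (s := Icc (0:ℝ) τ)
        rwa [hrestrict] at h
      have h2 := time_mass_bound hK hτ hrad (hzkpos k) hmeasmk (hzkA k)
      have h3 : (zk k) ^ ((1-γ)/2) ≤ (3/2:ℝ)^p * ((ρ^p)^k * x₀^p) := by
        have ha : (zk k) ^ ((1-γ)/2) ≤ (3/2 * (ρ^k * x₀)) ^ p := by
          rw [← hpdef]
          exact Real.rpow_le_rpow (hzkpos k).le (hzk2 k) hp0.le
        have hb : (3/2 * (ρ^k * x₀)) ^ p = (3/2:ℝ)^p * ((ρ^p)^k * x₀^p) := by
          rw [Real.mul_rpow (by norm_num) (by positivity),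
            Real.mul_rpow (by positivity) hx₀.le]
          congr 2
          rw [← Real.rpow_natCast ρ k, ← Real.rpow_natCast (ρ^p) k,
            ← Real.rpow_mul hρ0.le, ← Real.rpow_mul hρ0.le, mul_comm]
        rw [hb] at ha; exact ha
      calc (∫⁻ s in Icc (0:ℝ) τ, ∫⁻ x in Ioc (ρ^(k+1) * x₀) (ρ^k * x₀), ENNReal.ofReal x ∂(f s))
          ≤ ∫⁻ s in Icc (0:ℝ) τ, ∫⁻ x in Ioc (zk k / 2) (zk k), ENNReal.ofReal x ∂(f s) :=
            lintegral_mono fun s => lintegral_mono_set (hband k)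
        _ ≤ ((ENNReal.ofReal (c₁ * κ))⁻¹ * A * ENNReal.ofReal T) ^ ((1:ℝ)/2)
              * ENNReal.ofReal ((zk k) ^ ((1-γ)/2)) := h2
        _ ≤ G ^ ((1:ℝ)/2) * ENNReal.ofReal ((3/2:ℝ)^p * ((ρ^p)^k * x₀^p)) := by
            rw [hG]
            exact mul_le_mul_right (ENNReal.ofReal_le_ofReal h3) _
        _ = (G ^ ((1:ℝ)/2) * ENNReal.ofReal ((3/2:ℝ) ^ p) * ENNReal.ofReal (x₀ ^ p)) * r^k := by
            rw [ENNReal.ofReal_mul (by positivity), ENNReal.ofReal_mul (by positivity),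
              ENNReal.ofReal_pow (by positivity), hr]
            ring
    -- covering of (0, x₀]
    have hcover : Ioc (0:ℝ) x₀ = ⋃ k : ℕ, Ioc (ρ^(k+1) * x₀) (ρ^k * x₀) := by
      ext z
      simp only [mem_iUnion, mem_Ioc]
      constructor
      · rintro ⟨hz0, hzx⟩
        have hex : ∃ n : ℕ, ρ^n * x₀ < z := by
          obtain ⟨n, hn⟩ := exists_pow_lt_of_lt_one (div_pos hz0 hx₀) hρ1
          exact ⟨n, by rw [← lt_div_iff₀ hx₀] at *; exact hn⟩
        classical
        set n := Nat.find hex with hn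
        have hspec : ρ^n * x₀ < z := Nat.find_spec hex
        have hn0 : n ≠ 0 := by
          intro h
          rw [h, pow_zero, one_mul] at hspec
          linarith
        obtain ⟨m, hm⟩ := Nat.exists_eq_succ_of_ne_zero hn0
        refine ⟨m, ?_, ?_⟩
        · rw [← Nat.succ_eq_add_one, ← hm]; exact hspec
        · have := Nat.find_min hex (m := m) (by omega)
          push_neg at this
          exact this
      · rintro ⟨k, hk1, hk2⟩
        constructor
        · exact lt_trans (by positivity) hk1
        · calc z ≤ ρ^k * x₀ := hk2
            _ ≤ 1 * x₀ := by
                refine mul_le_mul_of_nonneg_right ?_ hx₀.le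
                exact pow_le_one₀ hρ0.le hρ1.le
            _ = x₀ := one_mul x₀
    have hdisj : Pairwise (Function.onFun Disjoint fun k : ℕ => Ioc (ρ^(k+1) * x₀) (ρ^k * x₀)) := by
      have haux : ∀ i j : ℕ, i < j →
          Disjoint (Ioc (ρ^(i+1) * x₀) (ρ^i * x₀)) (Ioc (ρ^(j+1) * x₀) (ρ^j * x₀)) := by
        intro i j hij
        refine Set.disjoint_left.2 fun x hxi hxj => ?_
        have h1 : ρ^j ≤ ρ^(i+1) := pow_le_pow_of_le_one hρ0.le hρ1.le (by omega)
        have h2 : ρ^j * x₀ ≤ ρ^(i+1) * x₀ := mul_le_mul_of_nonneg_right h1 hx₀.le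
        linarith [hxi.1, hxj.2]
      intro i j hij
      rcases lt_or_gt_of_ne hij with h | h
      · exact haux i j h
      · exact (haux j i h).symm
    -- summation
    have hmeas_band : ∀ k : ℕ, AEMeasurable
        (fun s => ∫⁻ x in Ioc (ρ^(k+1) * x₀) (ρ^k * x₀), ENNReal.ofReal x ∂(f s))
        (volume.restrict (Icc (0:ℝ) τ)) := by
      intro k
      have h := (hmeas (ρ^(k+1) * x₀) (ρ^k * x₀) (by positivity) ?_).restrict
        (s := Icc (0:ℝ) τ)
      · rwa [hrestrict] at h
      · have : ρ^(k+1) < ρ^k := by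
          rw [pow_succ]
          nlinarith [pow_pos hρ0 k]
        nlinarith
    calc (∫⁻ s in Icc (0:ℝ) τ, ∫⁻ x in Ioc (0:ℝ) x₀, ENNReal.ofReal x ∂(f s))
        = ∫⁻ s in Icc (0:ℝ) τ,
            ∑' k : ℕ, ∫⁻ x in Ioc (ρ^(k+1) * x₀) (ρ^k * x₀), ENNReal.ofReal x ∂(f s) := by
          refine lintegral_congr fun s => ?_
          rw [hcover, lintegral_iUnion (fun k => measurableSet_Ioc) hdisj]
      _ = ∑' k : ℕ, ∫⁻ s in Icc (0:ℝ) τ,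
            ∫⁻ x in Ioc (ρ^(k+1) * x₀) (ρ^k * x₀), ENNReal.ofReal x ∂(f s) :=
          lintegral_tsum hmeas_band
      _ ≤ ∑' k : ℕ, (G ^ ((1:ℝ)/2) * ENNReal.ofReal ((3/2:ℝ) ^ p) * ENNReal.ofReal (x₀ ^ p)) * r^k :=
          ENNReal.tsum_le_tsum hband_bound
      _ = (G ^ ((1:ℝ)/2) * ENNReal.ofReal ((3/2:ℝ) ^ p) * ENNReal.ofReal (x₀ ^ p)) * (1 - r)⁻¹ := by
          rw [ENNReal.tsum_mul_left, ENNReal.tsum_geometric]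
      _ = H * ENNReal.ofReal (x₀ ^ p) := by rw [hH]; ring
  -- conclusion
  refine ⟨H.toReal, ?_⟩
  intro t ht x₀ hx₀
  have hfinal : (∫⁻ s in Icc (0:ℝ) T, ∫⁻ x in Ioc (0:ℝ) x₀, ENNReal.ofReal x ∂(f s))
      ≤ H * ENNReal.ofReal (x₀ ^ p) := by
    refine ENNReal.le_of_forall_pos_le_add fun ε hε hfin => ?_
    set δ : ℝ := min ((ε:ℝ) / (Cm.toReal + 1)) T with hδ
    have hCm0 : (0:ℝ) < Cm.toReal + 1 := by positivity
    have hδ0 : 0 < δ := lt_min (by positivity) hT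
    have hδT : δ ≤ T := min_le_right _ _
    obtain ⟨τ, hτmem, hτgood⟩ : ∃ τ, τ ∈ Ioc (T - δ) T ∧
        (∀ᵐ z ∂(volume.restrict (Ioi (0:ℝ))), (∫⁻ u in Icc (0:ℝ) τ, Jflux K (f u) z) ≤ A) := by
      by_contra hcon
      push_neg at hcon
      rw [ae_iff] at hae
      have hsub : Ioc (T - δ) T ⊆
          {s : ℝ | ¬ ∀ᵐ z ∂(volume.restrict (Ioi (0:ℝ))),
            (∫⁻ u in Icc (0:ℝ) s, Jflux K (f u) z) ≤ A} :=
        fun s hs h => hcon s hs (h.mono fun z hz => not_lt.2 hz)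
      have h0 := measure_mono_null hsub hae
      rw [Measure.restrict_apply measurableSet_Ioc,
        inter_eq_left.2 (show Ioc (T - δ) T ⊆ Icc (0:ℝ) T from
          fun s hs => ⟨le_trans (by linarith) hs.1.le, hs.2⟩), Real.volume_Ioc] at h0
      exact absurd h0 (ENNReal.ofReal_pos.2 (by linarith)).ne'
    have hτ : τ ∈ Icc (0:ℝ) T := ⟨by linarith [hτmem.1], hτmem.2⟩
    have hkey := key τ hτ hτgood x₀ hx₀
    have hsplit : (∫⁻ s in Icc (0:ℝ) T, ∫⁻ x in Ioc (0:ℝ) x₀, ENNReal.ofReal x ∂(f s))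
        = (∫⁻ s in Icc (0:ℝ) τ, ∫⁻ x in Ioc (0:ℝ) x₀, ENNReal.ofReal x ∂(f s))
          + (∫⁻ s in Ioc τ T, ∫⁻ x in Ioc (0:ℝ) x₀, ENNReal.ofReal x ∂(f s)) := by
      rw [← Set.Icc_union_Ioc_eq_Icc hτ.1 hτ.2]
      exact lintegral_union measurableSet_Ioc
        (Set.disjoint_left.2 fun s hs hs' => absurd hs.2 (not_le.2 hs'.1))
    have hrem : (∫⁻ s in Ioc τ T, ∫⁻ x in Ioc (0:ℝ) x₀, ENNReal.ofReal x ∂(f s))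
        ≤ (ε : ℝ≥0∞) := by
      calc (∫⁻ s in Ioc τ T, ∫⁻ x in Ioc (0:ℝ) x₀, ENNReal.ofReal x ∂(f s))
          ≤ ∫⁻ _ in Ioc τ T, Cm := by
            refine lintegral_mono_ae ?_
            filter_upwards [ae_restrict_mem measurableSet_Ioc] with s hs
            have hsT : s ∈ Icc (0:ℝ) T := ⟨le_trans hτ.1 hs.1.le, hs.2⟩
            exact le_trans (lintegral_mono_set fun x hx => hx.1) (hCm s hsT)
        _ = Cm * ENNReal.ofReal (T - τ) := by rw [setLIntegral_const, Real.volume_Ioc]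
        _ ≤ ENNReal.ofReal (Cm.toReal + 1) * ENNReal.ofReal ((ε:ℝ)/(Cm.toReal+1)) := by
            refine mul_le_mul ?_ (ENNReal.ofReal_le_ofReal ?_) zero_le zero_le
            · calc Cm = ENNReal.ofReal Cm.toReal := (ENNReal.ofReal_toReal hCmfin.ne).symm
                _ ≤ ENNReal.ofReal (Cm.toReal + 1) := ENNReal.ofReal_le_ofReal (by linarith)
            · have h1 : T - τ < δ := by linarith [hτmem.1]
              exact le_trans h1.le (min_le_left _ _)
        _ = ENNReal.ofReal ((Cm.toReal + 1) * ((ε:ℝ)/(Cm.toReal+1))) :=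
            (ENNReal.ofReal_mul (by positivity)).symm
        _ = (ε : ℝ≥0∞) := by rw [mul_div_cancel₀ _ hCm0.ne', ENNReal.ofReal_coe_nnreal]
    rw [hsplit]
    exact add_le_add hkey hrem
  calc (∫⁻ s in Icc (0:ℝ) t, ∫⁻ x in Ioc (0:ℝ) x₀, ENNReal.ofReal x ∂(f s))
      ≤ ∫⁻ s in Icc (0:ℝ) T, ∫⁻ x in Ioc (0:ℝ) x₀, ENNReal.ofReal x ∂(f s) :=
        lintegral_mono' (Measure.restrict_mono (Icc_subset_Icc_right ht.2) le_rfl) le_rfl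
    _ ≤ H * ENNReal.ofReal (x₀ ^ p) := hfinal
    _ = ENNReal.ofReal (H.toReal * x₀ ^ p) := by
        rw [ENNReal.ofReal_mul ENNReal.toReal_nonneg, ENNReal.ofReal_toReal hHfin]
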